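/- arXiv:2409.10800 — 3 statements merged into one kernel-verified Lean document; each statement's English description precedes it below -/
import Mathlib

section
/- Let $l, w, g$ be integers and let $d, r_0, \chi_0$ be positive integers with $\gcd(r_0,\chi_0)=1$. Set $r = d r_0$, $\chi = d\chi_0$, $e = 1 + l r_0^2$, $g^{\mathrm{sp}} = 1 + (g-1)r + \tfrac{rl(r-1)}{2}$, and $m = \gcd(r, \chi, w+1-g^{\mathrm{sp}})$. Then $m$ divides $d$, and a tuple $(d_1,\dots,d_k)$ of positive integers with $d_1+\cdots+d_k = d$ satisfies, for every $1 \le i \le k$, that the rational number $\tfrac{e-1}{2} d_i\big(\sum_{j<i} d_j - \sum_{j>i} d_j\big) + \tfrac{w d_i}{d}$ is an integer, if and only if $\tfrac{d}{m}$ divides $d_i$ for every $1 \le i \le k$. -/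
private lemma sum_split {k : ℕ} (D : Fin k → ℤ) (i : Fin k) :
    (∑ j ∈ Finset.univ.filter (fun j => j < i), D j) + D i
      + (∑ j ∈ Finset.univ.filter (fun j => i < j), D j) = ∑ j, D j := by
  classical
  have h := Finset.sum_filter_add_sum_filter_not Finset.univ (fun j => j < i) D
  have h2 : Finset.univ.filter (fun j => ¬ j < i)
      = insert i (Finset.univ.filter (fun j => i < j)) := by
    ext j
    simp only [Finset.mem_filter, Finset.mem_univ, true_and, Finset.mem_insert, not_lt]
    constructor
    · intro hij
      rcases eq_or_lt_of_le hij with h | h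
      · exact Or.inl h.symm
      · exact Or.inr h
    · rintro (rfl | h)
      · exact le_refl _
      · exact le_of_lt h
  rw [h2, Finset.sum_insert (by simp)] at h
  linarith

/-- The membership condition defining the set `S^d_w` of partitions of `d`
(for the quiver with one vertex and `e = 1 + l r₀²` loops) is equivalent to each part
being divisible by `d/m`, where `m = gcd(r, χ, w + 1 - gˢᵖ)`; moreover `m ∣ d`. -/
theorem stmt_0 (l w g : ℤ) (d r0 χ0 : ℤ) (hd : 0 < d) (hr0 : 0 < r0) (hχ0 : 0 < χ0)
    (hcop : Int.gcd r0 χ0 = 1)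
    (r χ e gsp : ℤ) (hr : r = d * r0) (hχ : χ = d * χ0) (he : e = 1 + l * r0 ^ 2)
    (hgsp : 2 * gsp = 2 + 2 * (g - 1) * r + r * l * (r - 1))
    (m : ℕ) (hm : m = Int.gcd r (Int.gcd χ (w + 1 - gsp))) :
    (m : ℤ) ∣ d ∧
      ∀ (k : ℕ) (D : Fin k → ℤ), (∀ i, 0 < D i) → (∑ i, D i) = d →
        ((∀ i : Fin k, ∃ n : ℤ,
            ((e : ℚ) - 1) / 2 * (D i : ℚ) *
                ((∑ j ∈ Finset.univ.filter (fun j => j < i), (D j : ℚ)) -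
                  (∑ j ∈ Finset.univ.filter (fun j => i < j), (D j : ℚ))) +
              (w : ℚ) * (D i : ℚ) / (d : ℚ) = (n : ℚ))
          ↔ ∀ i : Fin k, (d / (m : ℤ)) ∣ D i) := by
  have hd0 : d ≠ 0 := hd.ne'
  -- `m = gcd d (w + 1 - gsp)`
  have hmeq : m = Int.gcd d (w + 1 - gsp) := by
    have h1 : Int.gcd r χ = d.natAbs := by
      rw [hr, hχ, Int.gcd_mul_left, hcop, mul_one]
    rw [hm, ← Int.gcd_assoc, h1]
    have : ((d.natAbs : ℤ)).gcd (w + 1 - gsp) = Int.gcd d (w + 1 - gsp) := by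
      unfold Int.gcd
      rw [Int.natAbs_natCast]
    exact this
  have hmd : (m : ℤ) ∣ d := by
    rw [hmeq]
    exact Int.gcd_dvd_left _ _
  refine ⟨hmd, ?_⟩
  intro k D hpos hsum
  -- positivity of the gcd
  have hmpos : 0 < Int.gcd d (w + 1 - gsp) := Int.gcd_pos_iff.mpr (Or.inl hd0)
  have hm0 : ((m : ℤ)) ≠ 0 := by
    rw [hmeq]
    exact_mod_cast hmpos.ne'
  have hmN : (m : ℤ) ∣ (w + 1 - gsp) := by
    rw [hmeq]; exact Int.gcd_dvd_right _ _
  have hdm : (m : ℤ) * (d / (m : ℤ)) = d := Int.mul_ediv_cancel' hmd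
  have hNm : (m : ℤ) * ((w + 1 - gsp) / (m : ℤ)) = w + 1 - gsp := Int.mul_ediv_cancel' hmN
  have hco : Int.gcd (d / (m : ℤ)) ((w + 1 - gsp) / (m : ℤ)) = 1 := by
    have := Int.gcd_div_gcd_div_gcd (i := d) (j := w + 1 - gsp) hmpos
    rwa [← hmeq] at this
  -- step 3: `d ∣ (w+1-gsp) * x ↔ (d / m) ∣ x`
  have step3 : ∀ x : ℤ, d ∣ (w + 1 - gsp) * x ↔ (d / (m : ℤ)) ∣ x := by
    intro x
    constructor
    · intro h
      have h1 : (m : ℤ) * (d / (m : ℤ)) ∣ (m : ℤ) * (((w + 1 - gsp) / (m : ℤ)) * x) := by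
        rw [hdm, ← mul_assoc, hNm]
        exact h
      have h2 : (d / (m : ℤ)) ∣ ((w + 1 - gsp) / (m : ℤ)) * x :=
        (mul_dvd_mul_iff_left hm0).mp h1
      exact Int.dvd_of_dvd_mul_right_of_gcd_one h2 hco
    · rintro ⟨y, rfl⟩
      exact ⟨((w + 1 - gsp) / (m : ℤ)) * y, by
        linear_combination (-((d / (m : ℤ)) * y)) * hNm + (((w + 1 - gsp) / (m : ℤ)) * y) * hdm⟩
  -- pointwise equivalence
  refine forall_congr' fun i => ?_
  set A : ℤ := ∑ j ∈ Finset.univ.filter (fun j => j < i), D j with hA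
  set B : ℤ := ∑ j ∈ Finset.univ.filter (fun j => i < j), D j with hB
  have hAB : A + D i + B = d := by rw [hA, hB, sum_split]; exact hsum
  have hAq : ((A : ℤ) : ℚ) = ∑ j ∈ Finset.univ.filter (fun j => j < i), ((D j : ℚ)) := by
    rw [hA]; push_cast; rfl
  have hBq : ((B : ℤ) : ℚ) = ∑ j ∈ Finset.univ.filter (fun j => i < j), ((D j : ℚ)) := by
    rw [hB]; push_cast; rfl
  rw [← hAq, ← hBq]
  -- step 1: clear denominators
  have hdq : (d : ℚ) ≠ 0 := Int.cast_ne_zero.mpr hd0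
  have step1 : (∃ n : ℤ,
      ((e : ℚ) - 1) / 2 * (D i : ℚ) * ((A : ℚ) - (B : ℚ)) + (w : ℚ) * (D i : ℚ) / (d : ℚ)
        = (n : ℚ))
      ↔ (2 * d) ∣ ((e - 1) * D i * (A - B) * d + 2 * w * D i) := by
    constructor
    · rintro ⟨n, hn⟩
      refine ⟨n, ?_⟩
      have h2 : (((e - 1) * D i * (A - B) * d + 2 * w * D i : ℤ) : ℚ)
          = ((2 * d * n : ℤ) : ℚ) := by
        push_cast
        field_simp at hn
        linear_combination hn
      exact_mod_cast h2
    · rintro ⟨n, hn⟩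
      refine ⟨n, ?_⟩
      have h2 : (((e - 1) * D i * (A - B) * d + 2 * w * D i : ℤ) : ℚ)
          = ((2 * d * n : ℤ) : ℚ) := by exact_mod_cast congrArg (fun t : ℤ => (t : ℚ)) hn
      push_cast at h2
      field_simp
      linear_combination h2
  rw [step1]
  -- step 2: the divisibility identity
  obtain ⟨c, hc⟩ := Int.even_mul_succ_self (r0 * D i - 1)
  have hT : (e - 1) * D i * (A - B) * d + 2 * w * D i
      = 2 * d * ((g - 1) * r0 * D i + l * r0 ^ 2 * D i * A + l * c)
        + 2 * ((w + 1 - gsp) * D i) := by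
    linear_combination (-(l * r0 ^ 2 * D i * d)) * hAB + (D i) * hgsp + (l * d) * hc
      + (D i * (A - B) * d) * he + (D i * (l * (r - 1) + 2 * (g - 1))) * hr
      + (D i * (d * r0) * l) * hr
  rw [hT, dvd_add_right (Dvd.intro _ rfl), show (2 : ℤ) * d = 2 * d from rfl]
  rw [mul_dvd_mul_iff_left (two_ne_zero)]
  exact step3 (D i)
end

section
/- Let $l, w, g$ be integers and let $d, r_0, \chi_0$ be positive integers with $\gcd(r_0,\chi_0)=1$. Set $r = d r_0$, $\chi = d\chi_0$, $e = 1 + l r_0^2$ and $g^{\mathrm{sp}} = 1 + (g-1)r + \tfrac{rl(r-1)}{2}$. If the tuple $(r, \chi, w+1-g^{\mathrm{sp}})$ is primitive, i.e. $\gcd(r, \chi, w+1-g^{\mathrm{sp}}) = 1$, then the only tuple $(d_1,\dots,d_k)$ of positive integers with $d_1+\cdots+d_k = d$ such that for every $i$ the rational number $\tfrac{e-1}{2} d_i\big(\sum_{j<i} d_j - \sum_{j>i} d_j\big) + \tfrac{w d_i}{d}$ is an integer, is the one-part tuple with $k = 1$ and $d_1 = d$. -/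
lemma key_dvd (d l r0 w m g e Di Ai Bi : ℤ)
    (he : e = 1 + l * r0 ^ 2)
    (hsum : Ai + Bi = d - Di)
    (h2w : 2*w = 2*m + 2*(g-1)*d*r0 + l*d*r0*(d*r0-1)) :
    (2*d ∣ d*(e-1)*Di*(Ai-Bi) + 2*w*Di) ↔ d ∣ m*Di := by
  obtain ⟨t, ht⟩ := Int.even_mul_succ_self (r0*Di)
  have ht' : r0*Di*(r0*Di+1) = 2*t := by linarith [ht]
  have hE : d*(e-1)*Di*(Ai-Bi) + 2*w*Di
      = 2*(m*Di) + 2*d*((g-1)*r0*Di + l*r0*Di*(d*r0 - r0*Bi) - l*t) := by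
    linear_combination Di * h2w - d*l*ht' + d*l*r0^2*Di*hsum + d*Di*(Ai-Bi)*he
  rw [hE, dvd_add_left ⟨_, rfl⟩]
  exact mul_dvd_mul_iff_left (two_ne_zero)

lemma rat_iff (d e w Di Ai Bi : ℤ) (hd : d ≠ 0) :
    (∃ n : ℤ, ((e:ℚ)-1)/2 * (Di:ℚ) * ((Ai:ℚ) - (Bi:ℚ)) + (w:ℚ)*(Di:ℚ)/(d:ℚ) = (n:ℚ))
    ↔ (2*d ∣ d*(e-1)*Di*(Ai-Bi) + 2*w*Di) := by
  have hd' : (d:ℚ) ≠ 0 := Int.cast_ne_zero.mpr hd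
  constructor
  · rintro ⟨n, hn⟩
    refine ⟨n, ?_⟩
    have h2 : ((d*(e-1)*Di*(Ai-Bi) + 2*w*Di : ℤ):ℚ) = ((2*d*n : ℤ):ℚ) := by
      push_cast
      field_simp at hn
      linear_combination hn
    exact_mod_cast h2
  · rintro ⟨n, hn⟩
    refine ⟨n, ?_⟩
    have h2 : ((d*(e-1)*Di*(Ai-Bi) + 2*w*Di : ℤ):ℚ) = ((2*d*n:ℤ):ℚ) := by exact_mod_cast hn
    push_cast at h2
    field_simp
    linear_combination h2

/-- If the tuple `(r, χ, w + 1 - gˢᵖ)` is primitive, then the only tuple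
`(d₁, …, d_k)` of positive integers summing to `d` satisfying the integrality condition
defining `S^d_w` is the one-part tuple `(d)`. -/
theorem stmt_1 (l w g : ℤ) (d r0 χ0 : ℤ) (hd : 0 < d) (hr0 : 0 < r0) (hχ0 : 0 < χ0)
    (hcop : Int.gcd r0 χ0 = 1)
    (r χ e gsp : ℤ) (hr : r = d * r0) (hχ : χ = d * χ0) (he : e = 1 + l * r0 ^ 2)
    (hgsp : 2 * gsp = 2 + 2 * (g - 1) * r + r * l * (r - 1))
    (hprim : Int.gcd r (Int.gcd χ (w + 1 - gsp)) = 1) :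
    ∀ (k : ℕ) (D : Fin k → ℤ), (∀ i, 0 < D i) → (∑ i, D i) = d →
      ((∀ i : Fin k, ∃ n : ℤ,
          ((e : ℚ) - 1) / 2 * (D i : ℚ) *
              ((∑ j ∈ Finset.univ.filter (fun j => j < i), (D j : ℚ)) -
                (∑ j ∈ Finset.univ.filter (fun j => i < j), (D j : ℚ))) +
            (w : ℚ) * (D i : ℚ) / (d : ℚ) = (n : ℚ))
        ↔ (k = 1 ∧ ∀ i : Fin k, D i = d)) := by
  intro k D hpos hsumd
  set m : ℤ := w + 1 - gsp with hm
  -- coprimality of d and m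
  have hgd : Int.gcd d m = 1 := by
    have h1 : ((Int.gcd d m : ℤ)) ∣ r := dvd_trans (Int.gcd_dvd_left d m) ⟨r0, hr⟩
    have h2 : ((Int.gcd d m : ℤ)) ∣ (Int.gcd χ m : ℤ) :=
      Int.dvd_coe_gcd (dvd_trans (Int.gcd_dvd_left d m) ⟨χ0, hχ⟩) (Int.gcd_dvd_right d m)
    have h3 : ((Int.gcd d m : ℤ)) ∣ (Int.gcd r (Int.gcd χ m) : ℤ) := Int.dvd_coe_gcd h1 h2
    rw [hprim] at h3
    have h4 : Int.gcd d m ∣ 1 := by exact_mod_cast h3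
    exact Nat.dvd_one.mp h4
  have hco : IsCoprime (d : ℤ) m := Int.isCoprime_iff_gcd_eq_one.mpr hgd
  have h2w : 2*w = 2*m + 2*(g-1)*d*r0 + l*d*r0*(d*r0-1) := by
    rw [hm]
    linear_combination hgsp + (2*(g-1) + l*(r + d*r0 - 1)) * hr
  have hdne : d ≠ 0 := ne_of_gt hd
  -- the main per-index equivalence
  have main : ∀ i : Fin k,
      ((∃ n : ℤ,
          ((e : ℚ) - 1) / 2 * (D i : ℚ) *
              ((∑ j ∈ Finset.univ.filter (fun j => j < i), (D j : ℚ)) -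
                (∑ j ∈ Finset.univ.filter (fun j => i < j), (D j : ℚ))) +
            (w : ℚ) * (D i : ℚ) / (d : ℚ) = (n : ℚ))
        ↔ d ∣ m * D i) := by
    intro i
    set Ai : ℤ := ∑ j ∈ Finset.univ.filter (fun j => j < i), D j with hAi
    set Bi : ℤ := ∑ j ∈ Finset.univ.filter (fun j => i < j), D j with hBi
    have cA : (∑ j ∈ Finset.univ.filter (fun j => j < i), ((D j : ℚ))) = (Ai : ℚ) := by
      rw [hAi]; push_cast; rfl
    have cB : (∑ j ∈ Finset.univ.filter (fun j => i < j), ((D j : ℚ))) = (Bi : ℚ) := by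
      rw [hBi]; push_cast; rfl
    have hsplit : Ai + ((Finset.univ.filter (fun j => ¬ j < i)).sum D) = d := by
      rw [hAi, ← hsumd]
      exact Finset.sum_filter_add_sum_filter_not _ _ _
    have hset : Finset.univ.filter (fun j : Fin k => ¬ j < i)
        = insert i (Finset.univ.filter (fun j => i < j)) := by
      ext j
      simp only [Finset.mem_filter, Finset.mem_univ, true_and, Finset.mem_insert, not_lt]
      constructor
      · intro h
        rcases lt_or_eq_of_le h with h' | h'
        · exact Or.inr h'
        · exact Or.inl h'.symm
      · rintro (rfl | h)
        · exact le_refl _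
        · exact le_of_lt h
    have hnotmem : i ∉ Finset.univ.filter (fun j : Fin k => i < j) := by simp
    have hsum2 : (Finset.univ.filter (fun j : Fin k => ¬ j < i)).sum D = D i + Bi := by
      rw [hset, Finset.sum_insert hnotmem, hBi]
    have hsumi : Ai + Bi = d - D i := by
      rw [hsum2] at hsplit; linarith
    rw [cA, cB, rat_iff d e w (D i) Ai Bi hdne]
    exact key_dvd d l r0 w m g e (D i) Ai Bi he hsumi h2w
  constructor
  · intro hcond
    have hDi : ∀ i : Fin k, D i = d := by
      intro i
      have hdvd : d ∣ D i := hco.dvd_of_dvd_mul_left ((main i).mp (hcond i))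
      have h1 : D i ≤ d := by
        rw [← hsumd]
        exact Finset.single_le_sum (fun j _ => (hpos j).le) (Finset.mem_univ i)
      have h2 : d ≤ D i := Int.le_of_dvd (hpos i) hdvd
      linarith
    have hksum : (k : ℤ) * d = d := by
      calc (k : ℤ) * d = ∑ _i : Fin k, d := by
            simp [Finset.sum_const, mul_comm]
        _ = ∑ i, D i := Finset.sum_congr rfl (fun i _ => (hDi i).symm)
        _ = d := hsumd
    have hk : (k : ℤ) = 1 := by
      have := mul_right_cancel₀ hdne (by linarith [hksum] : (k:ℤ)*d = 1*d)
      exact this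
    exact ⟨by exact_mod_cast hk, hDi⟩
  · rintro ⟨hk, hDi⟩ i
    exact (main i).mpr (by rw [hDi i]; exact dvd_mul_left d m)
end

section
/- Let $g, w$ be integers and let $r, l$ be positive integers. Set $g^{\mathrm{sp}} = 1 + (g-1)r + \tfrac{rl(r-1)}{2}$. Then $\gcd(r, w+1-g^{\mathrm{sp}}) = 1$ if and only if one of the following holds: (1) $l$ is even and $\gcd(r,w) = 1$; (2) $l$ is odd, $\gcd(r,w) = 1$, and $r \not\equiv 2 \pmod 4$; (3) $l$ is odd, $\gcd(r,w) = 2$, and $r/2$ is odd. -/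
lemma gcd_shift (r x y k : ℤ) (h : x = y + k * r) : Int.gcd r x = Int.gcd r y := by
  apply Nat.dvd_antisymm
  · rw [← Int.natCast_dvd_natCast]
    exact Int.dvd_coe_gcd (Int.gcd_dvd_left _ _) (by
      have hx : (Int.gcd r x : ℤ) ∣ x := (Int.gcd_dvd_right _ _)
      have hr : (Int.gcd r x : ℤ) ∣ r := (Int.gcd_dvd_left _ _)
      have hy : y = x - k * r := by linarith
      rw [hy]; exact dvd_sub hx (hr.mul_left k))
  · rw [← Int.natCast_dvd_natCast]
    exact Int.dvd_coe_gcd (Int.gcd_dvd_left _ _) (by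
      have hy : (Int.gcd r y : ℤ) ∣ y := (Int.gcd_dvd_right _ _)
      have hr : (Int.gcd r y : ℤ) ∣ r := (Int.gcd_dvd_left _ _)
      rw [h]; exact dvd_add hy (hr.mul_left k))

lemma gcd_dvd_two_gcd (s x : ℤ) : Int.gcd (2 * s) x ∣ 2 * Int.gcd s x := by
  have h1 : Int.gcd (2 * s) x ∣ Int.gcd (2 * s) (2 * x) := by
    rw [← Int.natCast_dvd_natCast]
    exact Int.dvd_coe_gcd (Int.gcd_dvd_left _ _) ((Int.gcd_dvd_right _ _).mul_left 2)
  simpa [Int.gcd_mul_left] using h1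

lemma two_dvd_gcd {s x : ℤ} (hx : (2:ℤ) ∣ x) : 2 ∣ Int.gcd (2 * s) x := by
  have : ((2:ℕ):ℤ) ∣ (Int.gcd (2 * s) x : ℤ) :=
    Int.dvd_coe_gcd ⟨s, rfl⟩ hx
  exact_mod_cast this

lemma two_dvd_of_dvd_gcd {s x : ℤ} (h : 2 ∣ Int.gcd (2 * s) x) : (2:ℤ) ∣ x := by
  have h1 : ((2:ℕ):ℤ) ∣ (Int.gcd (2 * s) x : ℤ) := by exact_mod_cast h
  exact h1.trans (Int.gcd_dvd_right _ _)

lemma gcd_two_mul_eq_one {s x : ℤ} (hs : s ≠ 0) (h1 : Int.gcd s x = 1)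
    (h2 : ¬ (2:ℤ) ∣ x) : Int.gcd (2 * s) x = 1 := by
  have hd : Int.gcd (2 * s) x ∣ 2 := by simpa [h1] using gcd_dvd_two_gcd s x
  have hle := Nat.le_of_dvd (by norm_num) hd
  have hpos : 0 < Int.gcd (2 * s) x := Int.gcd_pos_of_ne_zero_left x (by simpa using hs)
  have hne : Int.gcd (2 * s) x ≠ 2 := fun h => h2 (two_dvd_of_dvd_gcd (s := s) (by rw [h]))
  omega

lemma odd_case {s w : ℤ} (hs : ¬ (2:ℤ) ∣ s) (hspos : s ≠ 0) :
    Int.gcd (2 * s) (w - s) = 1 ↔ Int.gcd (2 * s) w = 2 := by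
  have hshift : Int.gcd s (w - s) = Int.gcd s w := gcd_shift s (w - s) w (-1) (by ring)
  constructor
  · intro h
    have hodd : ¬ (2:ℤ) ∣ (w - s) := fun hd => by
      have := two_dvd_gcd (s := s) hd; omega
    have hgsw : Int.gcd s w = 1 := by
      have hdvd : Int.gcd s (w - s) ∣ Int.gcd (2 * s) (w - s) :=
        Int.gcd_dvd_gcd_mul_left_left s (w - s) 2
      rw [hshift, h] at hdvd; exact Nat.dvd_one.mp hdvd
    have hw2 : (2:ℤ) ∣ w := by omega
    have hd2 : Int.gcd (2 * s) w ∣ 2 := by simpa [hgsw] using gcd_dvd_two_gcd s w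
    have h2d : 2 ∣ Int.gcd (2 * s) w := two_dvd_gcd hw2
    exact Nat.dvd_antisymm hd2 h2d
  · intro h
    have hw2 : (2:ℤ) ∣ w := two_dvd_of_dvd_gcd (s := s) (by rw [h])
    have hgsw : Int.gcd s w = 1 := by
      have hdvd : Int.gcd s w ∣ Int.gcd (2 * s) w := Int.gcd_dvd_gcd_mul_left_left s w 2
      rw [h] at hdvd
      have hsd : (Int.gcd s w : ℤ) ∣ s := (Int.gcd_dvd_left _ _)
      have hle := Nat.le_of_dvd (by norm_num) hdvd
      have hpos : 0 < Int.gcd s w := Int.gcd_pos_of_ne_zero_left w hspos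
      have hne : Int.gcd s w ≠ 2 := fun h' => hs (by rw [h'] at hsd; exact_mod_cast hsd)
      omega
    exact gcd_two_mul_eq_one hspos (by rwa [hshift]) (by omega)

lemma even_case {s w : ℤ} (hs : (2:ℤ) ∣ s) (hspos : s ≠ 0) :
    Int.gcd (2 * s) (w - s) = 1 ↔ Int.gcd (2 * s) w = 1 := by
  have hshift : Int.gcd s (w - s) = Int.gcd s w := gcd_shift s (w - s) w (-1) (by ring)
  constructor
  · intro h
    have hodd : ¬ (2:ℤ) ∣ (w - s) := fun hd => by
      have := two_dvd_gcd (s := s) hd; omega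
    have hgsw : Int.gcd s w = 1 := by
      have hdvd : Int.gcd s (w - s) ∣ Int.gcd (2 * s) (w - s) :=
        Int.gcd_dvd_gcd_mul_left_left s (w - s) 2
      rw [hshift, h] at hdvd; exact Nat.dvd_one.mp hdvd
    exact gcd_two_mul_eq_one hspos hgsw (by omega)
  · intro h
    have hodd : ¬ (2:ℤ) ∣ w := fun hd => by
      have := two_dvd_gcd (s := s) hd; omega
    have hgsw : Int.gcd s w = 1 := by
      have hdvd : Int.gcd s w ∣ Int.gcd (2 * s) w := Int.gcd_dvd_gcd_mul_left_left s w 2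
      rw [h] at hdvd; exact Nat.dvd_one.mp hdvd
    exact gcd_two_mul_eq_one hspos (hshift ▸ hgsw) (by omega)

/-- Characterization of the BPS condition `gcd(r, w + 1 - gˢᵖ) = 1` for the
pair `(r, w)` in terms of the parities of `l` and `r` and of `gcd(r, w)`. -/
theorem stmt_2 (g w : ℤ) (r l : ℤ) (hrpos : 0 < r) (hlpos : 0 < l)
    (gsp : ℤ) (hgsp : 2 * gsp = 2 + 2 * (g - 1) * r + r * l * (r - 1)) :
    Int.gcd r (w + 1 - gsp) = 1 ↔
      (Even l ∧ Int.gcd r w = 1) ∨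
      (Odd l ∧ Int.gcd r w = 1 ∧ ¬ (r % 4 = 2)) ∨
      (Odd l ∧ Int.gcd r w = 2 ∧ Odd (r / 2)) := by
  rcases Int.even_or_odd l with ⟨m, hm⟩ | ⟨m, hm⟩
  · -- l even
    subst hm
    have hev : Even (m + m) := ⟨m, rfl⟩
    have hno : ¬ Odd (m + m) := by rwa [Int.not_odd_iff_even]
    have hg : gsp = 1 + (g - 1) * r + m * r * (r - 1) := by
      have h2 : 2 * gsp = 2 * (1 + (g - 1) * r + m * r * (r - 1)) := by
        rw [hgsp]; ring
      linarith
    have hkey : Int.gcd r (w + 1 - gsp) = Int.gcd r w :=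
      gcd_shift r _ w (-(g - 1) - m * (r - 1)) (by rw [hg]; ring)
    rw [hkey]
    constructor
    · intro h; exact Or.inl ⟨hev, h⟩
    · rintro (⟨_, h⟩ | ⟨ho, _, _⟩ | ⟨ho, _, _⟩)
      · exact h
      · exact absurd ho hno
      · exact absurd ho hno
  · -- l odd
    have hlo : Odd l := ⟨m, hm⟩
    have hne : ¬ Even l := by rwa [Int.not_even_iff_odd]
    rcases Int.even_or_odd r with ⟨s, hsr⟩ | ⟨s, hsr⟩
    · -- r even : r = s + s = 2*s
      have hr2 : r = 2 * s := by omega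
      have hspos : s ≠ 0 := by omega
      have hg : gsp = 1 + (g - 1) * r + s * (2 * m + 1) * (2 * s - 1) := by
        have h2 : 2 * gsp = 2 * (1 + (g - 1) * r + s * (2 * m + 1) * (2 * s - 1)) := by
          rw [hgsp, hm, hr2]; ring
        linarith
      have hkey : Int.gcd r (w + 1 - gsp) = Int.gcd (2 * s) (w - s) := by
        rw [hr2] at hg ⊢
        exact gcd_shift (2 * s) _ (w - s)
          (-(g - 1) - (2 * m * s - m + s - 1)) (by rw [hg]; ring)
      have hdiv : r / 2 = s := by omega
      have hrw : Int.gcd r w = Int.gcd (2 * s) w := by rw [hr2]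
      rw [hkey, hdiv, hrw]
      rcases Int.even_or_odd s with ⟨t, hst⟩ | ⟨t, hst⟩
      · -- s even, r ≡ 0 mod 4
        have hs2 : (2:ℤ) ∣ s := ⟨t, by omega⟩
        have hmod : ¬ (r % 4 = 2) := by omega
        have hnos : ¬ Odd s := by rw [Int.not_odd_iff_even]; exact ⟨t, hst⟩
        rw [even_case hs2 hspos]
        constructor
        · intro h; exact Or.inr (Or.inl ⟨hlo, h, hmod⟩)
        · rintro (⟨he, _⟩ | ⟨_, h, _⟩ | ⟨_, _, ho⟩)
          · exact absurd he hne
          · exact h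
          · exact absurd ho hnos
      · -- s odd, r ≡ 2 mod 4
        have hs2 : ¬ (2:ℤ) ∣ s := by omega
        have hmod : r % 4 = 2 := by omega
        have hos : Odd s := ⟨t, hst⟩
        rw [odd_case hs2 hspos]
        constructor
        · intro h; exact Or.inr (Or.inr ⟨hlo, h, hos⟩)
        · rintro (⟨he, _⟩ | ⟨_, _, h⟩ | ⟨_, h, _⟩)
          · exact absurd he hne
          · exact absurd hmod h
          · exact h
    · -- r odd : r = 2*s + 1
      have hg : gsp = 1 + (g - 1) * r + r * (2 * m + 1) * s := by
        have h2 : 2 * gsp = 2 * (1 + (g - 1) * r + r * (2 * m + 1) * s) := by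
          rw [hgsp, hm, hsr]; ring
        linarith
      have hkey : Int.gcd r (w + 1 - gsp) = Int.gcd r w :=
        gcd_shift r _ w (-(g - 1) - (2 * m + 1) * s) (by rw [hg]; ring)
      have hmod : ¬ (r % 4 = 2) := by omega
      have hno2 : Int.gcd r w ≠ 2 := by
        intro h
        have : (Int.gcd r w : ℤ) ∣ r := (Int.gcd_dvd_left _ _)
        rw [h] at this
        have : (2:ℤ) ∣ r := by exact_mod_cast this
        omega
      rw [hkey]
      constructor
      · intro h; exact Or.inr (Or.inl ⟨hlo, h, hmod⟩)
      · rintro (⟨he, _⟩ | ⟨_, h, _⟩ | ⟨_, h, _⟩)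
        · exact absurd he hne
        · exact h
        · exact absurd h hno2
end
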